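/- Let s, μ, c > 0 with μ < c. Define S(x) = ∫₀ˣ e^{-2sζ/c}(1-ζ)^{-2μ/c} dζ and m(x) = e^{2sx/c}(1-x)^{2μ/c-1}/(cx) for x ∈ (0,1). Then the function m*(x) = S(x)² m(x) is integrable on (0,1). -/

import Mathlib

open MeasureTheory

set_option maxHeartbeats 1000000 in
/-- If `μ < c`, the conditioned speed density `m*(x) = S(x)² m(x)` of the
Wright–Fisher diffusion conditioned never to hit `0` is integrable on `(0,1)`. -/
theorem conditioned_speed_density_integrable (s μ c : ℝ) (hs : 0 < s)
    (hμ : 0 < μ) (hc : 0 < c) (h : μ < c) :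
    IntegrableOn
      (fun x : ℝ =>
        (∫ t in (0 : ℝ)..x, Real.exp (-2 * s * t / c) * (1 - t) ^ (-(2 * μ / c))) ^ 2 *
          (Real.exp (2 * s * x / c) * (1 - x) ^ (2 * μ / c - 1) / (c * x)))
      (Set.Ioo (0 : ℝ) 1) := by
  set a : ℝ := 2 * μ / c with ha_def
  have ha0 : 0 < a := by positivity
  have ha2 : a < 2 := by
    rw [ha_def, div_lt_iff₀ hc]; linarith
  set b : ℝ := (max a 1 + (1 + a / 2)) / 2 with hb_def
  have hmaxlt : max a 1 < 1 + a / 2 := by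
    rcases max_cases a 1 with ⟨hm, _⟩ | ⟨hm, _⟩ <;> rw [hm] <;> linarith
  have hb1 : 1 < b := by
    have := le_max_right a 1; rw [hb_def]; nlinarith
  have hba : a < b := by
    have := le_max_left a 1; rw [hb_def]; nlinarith
  have hb2 : b < 1 + a / 2 := by
    rw [hb_def]; nlinarith
  set F : ℝ → ℝ := fun t => Real.exp (-2 * s * t / c) * (1 - t) ^ (-a) with hF_def
  set S : ℝ → ℝ := fun x => ∫ t in (0 : ℝ)..x, F t with hS_def
  set m : ℝ → ℝ := fun x =>
    Real.exp (2 * s * x / c) * (1 - x) ^ (a - 1) / (c * x) with hm_def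
  -- Continuity of F on Iio 1
  have hFcont : ContinuousOn F (Set.Iio 1) := by
    apply ContinuousOn.mul
    · exact (Real.continuous_exp.comp (by continuity)).continuousOn
    · apply ContinuousOn.rpow_const
      · exact (continuous_const.sub continuous_id).continuousOn
      · intro t ht
        simp only [Set.mem_Iio] at ht
        exact Or.inl (ne_of_gt (by linarith))
  -- F integrable on any Icc 0 r with r < 1
  have hFint : ∀ r : ℝ, r < 1 → IntegrableOn F (Set.Icc 0 r) := fun r hr =>
    (hFcont.mono (fun t ht => lt_of_le_of_lt ht.2 hr : Set.Icc 0 r ⊆ Set.Iio 1)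
      ).integrableOn_compact isCompact_Icc
  -- Continuity of S on Ioo 0 1
  have hScont : ContinuousOn S (Set.Ioo 0 1) := by
    intro x hx
    obtain ⟨hx0, hx1⟩ := hx
    set r : ℝ := (x + 1) / 2 with hr_def
    have hxr : x < r := by rw [hr_def]; linarith
    have hr1 : r < 1 := by rw [hr_def]; linarith
    have hr0 : (0 : ℝ) ≤ r := by rw [hr_def]; linarith
    have hcont : ContinuousOn S (Set.uIcc 0 r) := by
      apply intervalIntegral.continuousOn_primitive_interval
      rw [Set.uIcc_of_le hr0]
      exact hFint r hr1
    have hmem : Set.uIcc 0 r ∈ nhds x := by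
      rw [Set.uIcc_of_le hr0]
      exact Icc_mem_nhds hx0 hxr
    exact ((hcont.continuousAt hmem).continuousWithinAt)
  -- Continuity of m on Ioo 0 1
  have hmcont : ContinuousOn m (Set.Ioo 0 1) := by
    apply ContinuousOn.div
    · apply ContinuousOn.mul
      · exact (Real.continuous_exp.comp (by continuity)).continuousOn
      · apply ContinuousOn.rpow_const
        · exact (continuous_const.sub continuous_id).continuousOn
        · intro t ht
          exact Or.inl (ne_of_gt (by nlinarith [ht.2]))
    · exact (continuous_const.mul continuous_id).continuousOn
    · intro x hx
      have := hx.1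
      positivity
  have hmeas : AEStronglyMeasurable (fun x => S x ^ 2 * m x)
      (volume.restrict (Set.Ioo (0 : ℝ) 1)) :=
    (((hScont.pow 2).mul hmcont).aestronglyMeasurable measurableSet_Ioo)
  -- nonnegativity facts
  have hS0 : ∀ x ∈ Set.Ioo (0 : ℝ) 1, 0 ≤ S x := by
    intro x hx
    apply intervalIntegral.integral_nonneg hx.1.le
    intro t ht
    have h1t : (0 : ℝ) ≤ 1 - t := by
      have := ht.2; have := hx.2; linarith
    exact mul_nonneg (Real.exp_nonneg _) (Real.rpow_nonneg h1t _)
  have hm0 : ∀ x ∈ Set.Ioo (0 : ℝ) 1, 0 ≤ m x := by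
    intro x hx
    have h1 : (0 : ℝ) < x := hx.1
    have h2 : (0 : ℝ) ≤ 1 - x := by linarith [hx.2]
    exact div_nonneg (mul_nonneg (Real.exp_nonneg _) (Real.rpow_nonneg h2 _))
      (by positivity)
  -- pointwise bound F t ≤ (1 - t) ^ (-b) for t ∈ [0, x], x < 1
  have hFle : ∀ t : ℝ, 0 ≤ t → t < 1 → F t ≤ (1 - t) ^ (-b) := by
    intro t ht0 ht1
    have h1t : 0 < 1 - t := by linarith
    have h1t1 : 1 - t ≤ 1 := by linarith
    calc F t ≤ 1 * (1 - t) ^ (-a) := by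
          apply mul_le_mul_of_nonneg_right _ (Real.rpow_nonneg h1t.le _)
          rw [Real.exp_le_one_iff]
          rw [show -2 * s * t / c = -(2 * s * t / c) by ring]
          have : (0 : ℝ) ≤ 2 * s * t / c := by positivity
          linarith
      _ = (1 - t) ^ (-a) := one_mul _
      _ ≤ (1 - t) ^ (-b) := Real.rpow_le_rpow_of_exponent_ge h1t h1t1 (by linarith)
  -- key upper bound for S near 1
  have hSle : ∀ x ∈ Set.Ioo (0 : ℝ) 1, S x ≤ (1 - x) ^ (1 - b) / (b - 1) := by
    intro x hx
    obtain ⟨hx0, hx1⟩ := hx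
    have h1x : 0 < 1 - x := by linarith
    have hint2 : IntervalIntegrable (fun t : ℝ => (1 - t) ^ (-b)) volume 0 x := by
      have h0 : IntervalIntegrable (fun u : ℝ => u ^ (-b)) volume (1 - x) 1 := by
        apply intervalIntegral.intervalIntegrable_rpow (μ := volume)
        right
        rw [Set.uIcc_of_le (by linarith : 1 - x ≤ 1)]
        intro hmem
        exact absurd hmem.1 (by linarith)
      have := h0.symm.comp_sub_left 1
      simpa using this
    have hle : S x ≤ ∫ t in (0 : ℝ)..x, (1 - t) ^ (-b) := by
      apply intervalIntegral.integral_mono_on hx0.le _ hint2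
      · intro t ht
        exact hFle t ht.1 (lt_of_le_of_lt ht.2 hx1)
      · rw [intervalIntegrable_iff_integrableOn_Icc_of_le hx0.le]
        exact hFint x hx1
    have hcomp : (∫ t in (0 : ℝ)..x, (1 - t) ^ (-b)) =
        ∫ u in (1 - x)..(1 : ℝ), u ^ (-b) := by
      have := intervalIntegral.integral_comp_sub_left
        (a := (0 : ℝ)) (b := x) (fun u : ℝ => u ^ (-b)) 1
      simpa using this
    have hval : (∫ u in (1 - x)..(1 : ℝ), u ^ (-b)) =
        ((1 : ℝ) ^ (-b + 1) - (1 - x) ^ (-b + 1)) / (-b + 1) := by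
      rw [integral_rpow]
      right
      constructor
      · intro hb'
        rw [neg_eq_iff_eq_neg] at hb'
        linarith
      · rw [Set.uIcc_of_le (by linarith : 1 - x ≤ 1)]
        intro hmem
        exact absurd hmem.1 (by linarith)
    have h1b : (1 : ℝ) ^ (-b + 1) = 1 := Real.one_rpow _
    calc S x ≤ ∫ t in (0 : ℝ)..x, (1 - t) ^ (-b) := hle
      _ = (1 - (1 - x) ^ (-b + 1)) / (-b + 1) := by rw [hcomp, hval, h1b]
      _ = ((1 - x) ^ (1 - b) - 1) / (b - 1) := by
          rw [show (1 : ℝ) - b = -b + 1 by ring]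
          rw [div_eq_div_iff (by intro h'; linarith [h'] : (-b + 1 : ℝ) ≠ 0)
            (by intro h'; rw [sub_eq_zero] at h'; linarith : (b - 1 : ℝ) ≠ 0)]
          ring
      _ ≤ (1 - x) ^ (1 - b) / (b - 1) := by
          have h0 : (0:ℝ) ≤ b - 1 := by linarith
          have h1 : (1 - x) ^ (1 - b) - 1 ≤ (1 - x) ^ (1 - b) := by linarith
          exact div_le_div_of_nonneg_right h1 h0
  -- bound for S near 0
  have hSle0 : ∀ x ∈ Set.Ioc (0 : ℝ) (1/2), S x ≤ 2 ^ b * x := by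
    intro x hx
    obtain ⟨hx0, hx2⟩ := hx
    have hle : S x ≤ ∫ _t in (0 : ℝ)..x, (2:ℝ) ^ b := by
      apply intervalIntegral.integral_mono_on hx0.le _ intervalIntegrable_const
      · intro t ht
        have ht2 : t ≤ 1 / 2 := le_trans ht.2 hx2
        have h1t : (1:ℝ)/2 ≤ 1 - t := by linarith
        calc F t ≤ (1 - t) ^ (-b) := hFle t ht.1 (by linarith)
          _ ≤ ((1:ℝ)/2) ^ (-b) :=
              Real.rpow_le_rpow_of_nonpos (by norm_num) h1t (by linarith)
          _ = 2 ^ b := by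
              rw [show ((1:ℝ)/2) = 2⁻¹ by norm_num,
                Real.inv_rpow (by norm_num : (0:ℝ) ≤ 2), ← Real.rpow_neg
                (by norm_num : (0:ℝ) ≤ 2), neg_neg]
      · rw [intervalIntegrable_iff_integrableOn_Icc_of_le hx0.le]
        exact hFint x (by linarith)
    calc S x ≤ ∫ _t in (0 : ℝ)..x, (2:ℝ) ^ b := hle
      _ = 2 ^ b * x := by simp [mul_comm]
  -- Integrability on (0, 1/2]
  have hI1 : IntegrableOn (fun x => S x ^ 2 * m x) (Set.Ioc (0:ℝ) (1/2)) := by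
    set C₁ : ℝ := ((2:ℝ) ^ b) ^ 2 * (Real.exp (2 * s / c) * 2 / c) * (1/2) with hC₁
    apply Integrable.mono' (g := fun _ => C₁)
      (integrableOn_const (by
        rw [Real.volume_Ioc]; exact ENNReal.ofReal_ne_top))
    · exact hmeas.mono_set (show Set.Ioc (0:ℝ) (1/2) ⊆ Set.Ioo (0:ℝ) 1 from
        fun y hy => ⟨hy.1, lt_of_le_of_lt hy.2 (by norm_num)⟩)
    · rw [ae_restrict_iff' measurableSet_Ioc]
      filter_upwards with x hx
      obtain ⟨hx0, hx2⟩ := hx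
      have hx1 : x < 1 := by linarith
      have hxIoo : x ∈ Set.Ioo (0:ℝ) 1 := ⟨hx0, hx1⟩
      have h1x : (0:ℝ) < 1 - x := by linarith
      have hmle : m x ≤ Real.exp (2 * s / c) * 2 / (c * x) := by
        rw [hm_def]
        have he : Real.exp (2 * s * x / c) ≤ Real.exp (2 * s / c) := by
          apply Real.exp_le_exp.mpr
          apply div_le_div_of_nonneg_right _ hc.le
          nlinarith
        have hr2 : (1 - x) ^ (a - 1) ≤ 2 := by
          calc (1 - x) ^ (a - 1) ≤ (1 - x) ^ (-1 : ℝ) :=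
                Real.rpow_le_rpow_of_exponent_ge h1x (by linarith) (by linarith)
            _ = (1 - x)⁻¹ := Real.rpow_neg_one _
            _ ≤ ((1:ℝ)/2)⁻¹ := inv_anti₀ (by norm_num) (by linarith)
            _ = 2 := by norm_num
        have hnum : Real.exp (2 * s * x / c) * (1 - x) ^ (a - 1) ≤
            Real.exp (2 * s / c) * 2 :=
          mul_le_mul he hr2 (Real.rpow_nonneg h1x.le _) (Real.exp_nonneg _)
        exact div_le_div_of_nonneg_right hnum (by positivity)
      have hSx : S x ≤ 2 ^ b * x := hSle0 x ⟨hx0, hx2⟩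
      have hS0x : 0 ≤ S x := hS0 x hxIoo
      have habs : S x ^ 2 * m x ≤ C₁ := by
        calc S x ^ 2 * m x
            ≤ (2 ^ b * x) ^ 2 * (Real.exp (2 * s / c) * 2 / (c * x)) :=
              mul_le_mul (pow_le_pow_left₀ hS0x hSx 2) hmle (hm0 x hxIoo)
                (by positivity)
          _ = ((2:ℝ) ^ b) ^ 2 * (Real.exp (2 * s / c) * 2 / c) * x := by
              field_simp
          _ ≤ C₁ := by
              rw [hC₁]
              exact mul_le_mul_of_nonneg_left hx2 (by positivity)
      rw [Real.norm_eq_abs, abs_of_nonneg (mul_nonneg (by positivity) (hm0 x hxIoo))]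
      exact habs
  -- Integrability on (1/2, 1)
  have hI2 : IntegrableOn (fun x => S x ^ 2 * m x) (Set.Ioo (1/2 : ℝ) 1) := by
    set p : ℝ := 1 + a - 2 * b with hp_def
    have hp : -1 < p := by rw [hp_def]; linarith
    set C₂ : ℝ := (1 / (b - 1)) ^ 2 * (Real.exp (2 * s / c) * 2 / c) with hC₂
    have hgint : IntegrableOn (fun x : ℝ => C₂ * (1 - x) ^ p) (Set.Ioo (1/2 : ℝ) 1) := by
      have h1 : IntervalIntegrable (fun u : ℝ => u ^ p) volume 0 (1/2) :=
        intervalIntegral.intervalIntegrable_rpow' hp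
      have h2 := h1.symm.comp_sub_left 1
      norm_num at h2
      have h3 : IntegrableOn (fun x : ℝ => (1 - x) ^ p) (Set.Ioc (1/2 : ℝ) 1) := by
        rw [intervalIntegrable_iff_integrableOn_Ioc_of_le
          (by norm_num : (1:ℝ)/2 ≤ 1)] at h2
        exact h2
      exact ((h3.mono_set Set.Ioo_subset_Ioc_self).const_mul C₂)
    apply Integrable.mono' hgint
    · exact hmeas.mono_set (show Set.Ioo (1/2:ℝ) 1 ⊆ Set.Ioo (0:ℝ) 1 from
        fun y hy => ⟨by linarith [hy.1], hy.2⟩)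
    · rw [ae_restrict_iff' measurableSet_Ioo]
      filter_upwards with x hx
      obtain ⟨hx2, hx1⟩ := hx
      have hx0 : (0:ℝ) < x := by linarith
      have hxIoo : x ∈ Set.Ioo (0:ℝ) 1 := ⟨hx0, hx1⟩
      have h1x : (0:ℝ) < 1 - x := by linarith
      have hS0x : 0 ≤ S x := hS0 x hxIoo
      have hSx : S x ≤ (1 - x) ^ (1 - b) / (b - 1) := hSle x hxIoo
      have hmle : m x ≤ (Real.exp (2 * s / c) * 2 / c) * (1 - x) ^ (a - 1) := by
        rw [hm_def]
        have hr : (0:ℝ) ≤ (1 - x) ^ (a - 1) := Real.rpow_nonneg h1x.le _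
        have he : Real.exp (2 * s * x / c) ≤ Real.exp (2 * s / c) := by
          apply Real.exp_le_exp.mpr
          apply div_le_div_of_nonneg_right _ hc.le
          nlinarith
        have hcx : c / 2 ≤ c * x := by nlinarith
        calc Real.exp (2 * s * x / c) * (1 - x) ^ (a - 1) / (c * x)
            ≤ Real.exp (2 * s / c) * (1 - x) ^ (a - 1) / (c * x) :=
              div_le_div_of_nonneg_right (mul_le_mul_of_nonneg_right he hr)
                (by positivity)
          _ ≤ Real.exp (2 * s / c) * (1 - x) ^ (a - 1) / (c / 2) :=
              div_le_div_of_nonneg_left (by positivity) (by positivity) hcx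
          _ = (Real.exp (2 * s / c) * 2 / c) * (1 - x) ^ (a - 1) := by
              field_simp
      have hbound : S x ^ 2 * m x ≤ C₂ * (1 - x) ^ p := by
        calc S x ^ 2 * m x
            ≤ ((1 - x) ^ (1 - b) / (b - 1)) ^ 2 *
              ((Real.exp (2 * s / c) * 2 / c) * (1 - x) ^ (a - 1)) :=
              mul_le_mul (pow_le_pow_left₀ hS0x hSx 2) hmle (hm0 x hxIoo)
                (by positivity)
          _ = C₂ * (1 - x) ^ p := by
              have e1 : ((1 - x) ^ ((1:ℝ) - b)) ^ (2:ℕ) = (1 - x) ^ (2 - 2*b) := by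
                rw [← Real.rpow_natCast ((1-x) ^ ((1:ℝ)-b)) 2,
                  ← Real.rpow_mul h1x.le]
                congr 1
                push_cast
                ring
              have e3 : ((1 - x) ^ ((1:ℝ) - b)) ^ (2:ℕ) * (1 - x) ^ (a - 1)
                  = (1 - x) ^ p := by
                rw [e1, ← Real.rpow_add h1x, hp_def]
                congr 1
                ring
              calc ((1 - x) ^ ((1:ℝ) - b) / (b - 1)) ^ 2 *
                    ((Real.exp (2 * s / c) * 2 / c) * (1 - x) ^ (a - 1))
                  = (1 / (b - 1)) ^ 2 * (Real.exp (2 * s / c) * 2 / c) *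
                    (((1 - x) ^ ((1:ℝ) - b)) ^ (2:ℕ) * (1 - x) ^ (a - 1)) := by
                    ring
                _ = C₂ * (1 - x) ^ p := by rw [e3, hC₂]
      rw [Real.norm_eq_abs, abs_of_nonneg (mul_nonneg (by positivity) (hm0 x hxIoo))]
      exact hbound
  have hunion : Set.Ioc (0:ℝ) (1/2) ∪ Set.Ioo (1/2:ℝ) 1 = Set.Ioo (0:ℝ) 1 :=
    Set.Ioc_union_Ioo_eq_Ioo (by norm_num) (by norm_num)
  have hfinal := hI1.union hI2
  rw [hunion] at hfinal
  exact hfinal
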